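/- For a ray r with apex p and unit direction u, define the algebraic distance d_alg(x, r) as follows: d_alg(p, r) = 0; for x ≠ p, let w = (x − p)/‖x − p‖, c = ⟪u, w⟫, and σ = ω(u, w) the value of the standard area form (orientation) of ℝ² on the pair (u, w); set d_alg(x, r) = 1 − c if σ ≥ 0, and d_alg(x, r) = 3 + c if σ < 0. Then for any two rays r and s with unit direction vectors and every point x ∈ ℝ²: d∠(x, r) < d∠(x, s) if and only if d_alg(x, r) < d_alg(x, s). -/

import Mathlib

noncomputable section

open Real

abbrev Pt : Type := EuclideanSpace ℝ (Fin 2)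

instance : Fact (Module.finrank ℝ Pt = 2) := ⟨finrank_euclideanSpace_fin⟩

noncomputable def stdOrient : Orientation ℝ Pt (Fin 2) :=
  (EuclideanSpace.basisFun (Fin 2) ℝ).toBasis.orientation

/-- A ray in the plane, given by its apex and its direction vector. -/
structure Ray2 where
  apex : Pt
  dir : Pt

/-- The set of points of a ray. -/
def Ray2.carrier (r : Ray2) : Set Pt := {x | ∃ t : ℝ, 0 ≤ t ∧ x = r.apex + t • r.dir}

/-- The representative in `[0, 2π)` of an angle. -/
noncomputable def angleIco (θ : Real.Angle) : ℝ :=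
  if 0 ≤ θ.toReal then θ.toReal else θ.toReal + 2 * π

open Classical in
/-- The counterclockwise angular distance from a point `x` to a ray `r`. -/
noncomputable def adist (x : Pt) (r : Ray2) : ℝ :=
  if x = r.apex then 0 else angleIco (stdOrient.oangle r.dir (x - r.apex))

/-- The Voronoi region of a ray `r` in a finite set of rays `R`. -/
def rreg (R : Finset Ray2) (r : Ray2) : Set Pt :=
  {x | ∀ s ∈ R, s ≠ r → adist x r < adist x s}

/-- The rotating rays Voronoi diagram. -/
def RVD (R : Finset Ray2) : Set Pt :=
  (Set.univ \ ⋃ r ∈ R, rreg R r) ∪ ⋃ r ∈ R, r.carrier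

/-- The point of the plane with the given coordinates. -/
noncomputable def pt (a b : ℝ) : Pt := (WithLp.equiv 2 (Fin 2 → ℝ)).symm ![a, b]

open Classical in
/-- The piecewise-algebraic surrogate of the angular distance. -/
noncomputable def dalg (x : Pt) (r : Ray2) : ℝ :=
  if x = r.apex then 0
  else
    if 0 ≤ stdOrient.areaForm r.dir (‖x - r.apex‖⁻¹ • (x - r.apex)) then
      1 - (inner ℝ r.dir (‖x - r.apex‖⁻¹ • (x - r.apex)) : ℝ)
    else
      3 + (inner ℝ r.dir (‖x - r.apex‖⁻¹ • (x - r.apex)) : ℝ)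


section Aux

open Complex in
theorem my_areaForm_eq {E : Type*} [NormedAddCommGroup E] [InnerProductSpace ℝ E]
    [Fact (Module.finrank ℝ E = 2)] (o : Orientation ℝ E (Fin 2)) (x y : E) :
    o.areaForm x y = ‖x‖ * ‖y‖ * Real.Angle.sin (o.oangle x y) := by
  by_cases hx : x = 0; · simp [hx]
  by_cases hy : y = 0; · simp [hy]
  have hxn : ‖x‖ ≠ 0 := by simpa using hx
  have hyn : ‖y‖ ≠ 0 := by simpa using hy
  rw [Orientation.oangle, Real.Angle.sin_coe, Complex.sin_arg, o.norm_kahler]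
  simp only [Orientation.kahler_apply_apply, Complex.add_im, Complex.ofReal_im,
    Complex.real_smul, Complex.mul_im, Complex.ofReal_re, Complex.I_im, Complex.I_re,
    mul_zero, mul_one, zero_add, add_zero]
  field_simp

noncomputable def gfun (a : ℝ) : ℝ :=
  if 0 ≤ Real.sin a then 1 - Real.cos a else 3 + Real.cos a

theorem gfun_eval {a : ℝ} (ha : a ∈ Set.Ico 0 (2 * π)) :
    gfun a = if a ≤ π then 1 - Real.cos a else 3 + Real.cos a := by
  obtain ⟨h0, h2⟩ := ha
  unfold gfun
  by_cases h : a ≤ π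
  · rw [if_pos (Real.sin_nonneg_of_nonneg_of_le_pi h0 h), if_pos h]
  · push_neg at h
    have : Real.sin a < 0 := by
      have := Real.sin_pos_of_pos_of_lt_pi (x := a - π) (by linarith) (by linarith)
      rw [Real.sin_sub_pi] at this; linarith
    rw [if_neg (by linarith), if_neg (by linarith)]

theorem gfun_strictMonoOn : StrictMonoOn gfun (Set.Ico 0 (2 * π)) := by
  intro a ha b hb hab
  rw [gfun_eval ha, gfun_eval hb]
  have hca : -1 ≤ Real.cos a := Real.neg_one_le_cos a
  by_cases h1 : a ≤ π <;> by_cases h2 : b ≤ π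
  · rw [if_pos h1, if_pos h2]
    have := Real.strictAntiOn_cos ⟨ha.1, h1⟩ ⟨ha.1.trans hab.le, h2⟩ hab
    linarith
  · push_neg at h2
    rw [if_pos h1, if_neg (not_le.2 h2)]
    have hb2 : 2 * π - b ∈ Set.Icc 0 π := ⟨by linarith [hb.2], by linarith⟩
    have : Real.cos π < Real.cos (2 * π - b) :=
      Real.strictAntiOn_cos hb2 ⟨Real.pi_pos.le, le_rfl⟩ (by linarith)
    rw [Real.cos_pi, Real.cos_two_pi_sub] at this
    linarith
  · push_neg at h1; linarith
  · push_neg at h1 h2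
    rw [if_neg (not_le.2 h1), if_neg (not_le.2 h2)]
    have h2b : 2 * π - b ∈ Set.Icc 0 π := ⟨by linarith [hb.2], by linarith⟩
    have h2a : 2 * π - a ∈ Set.Icc 0 π := ⟨by linarith [ha.2], by linarith⟩
    have : Real.cos (2 * π - a) < Real.cos (2 * π - b) :=
      Real.strictAntiOn_cos h2b h2a (by linarith)
    rw [Real.cos_two_pi_sub, Real.cos_two_pi_sub] at this
    linarith

theorem angleIco_mem (th : Real.Angle) : angleIco th ∈ Set.Ico 0 (2 * π) := by
  have h1 := Real.Angle.neg_pi_lt_toReal th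
  have h2 := Real.Angle.toReal_le_pi th
  have hp := Real.pi_pos
  unfold angleIco
  split <;> constructor <;> [skip; linarith; linarith; linarith]
  assumption

theorem adist_mem (x : Pt) (r : Ray2) : adist x r ∈ Set.Ico 0 (2 * π) := by
  unfold adist
  split
  · exact ⟨le_rfl, by linarith [Real.pi_pos]⟩
  · exact angleIco_mem _

theorem sin_angleIco (th : Real.Angle) : Real.sin (angleIco th) = Real.Angle.sin th := by
  unfold angleIco
  split
  · rw [← Real.Angle.coe_toReal th, Real.Angle.sin_coe]; rw [Real.Angle.coe_toReal]
  · rw [Real.sin_add_two_pi, ← Real.Angle.sin_coe, Real.Angle.coe_toReal]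

theorem cos_angleIco (th : Real.Angle) : Real.cos (angleIco th) = Real.Angle.cos th := by
  unfold angleIco
  split
  · rw [← Real.Angle.cos_coe, Real.Angle.coe_toReal]
  · rw [Real.cos_add_two_pi, ← Real.Angle.cos_coe, Real.Angle.coe_toReal]

theorem dalg_eq_gfun (x : Pt) (r : Ray2) (hr : ‖r.dir‖ = 1) :
    dalg x r = gfun (adist x r) := by
  unfold dalg adist
  by_cases hx : x = r.apex
  · simp [hx, gfun]
  · rw [if_neg hx, if_neg hx]
    have hv : x - r.apex ≠ 0 := sub_ne_zero.2 hx
    have hnv : (0 : ℝ) < ‖x - r.apex‖⁻¹ := inv_pos.2 (norm_pos_iff.2 hv)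
    have hw : ‖(‖x - r.apex‖⁻¹ • (x - r.apex))‖ = 1 := norm_smul_inv_norm hv
    have hoa : stdOrient.oangle r.dir (‖x - r.apex‖⁻¹ • (x - r.apex)) =
        stdOrient.oangle r.dir (x - r.apex) :=
      stdOrient.oangle_smul_right_of_pos _ _ hnv
    have hc : (inner ℝ r.dir (‖x - r.apex‖⁻¹ • (x - r.apex)) : ℝ) =
        Real.Angle.cos (stdOrient.oangle r.dir (x - r.apex)) := by
      rw [stdOrient.inner_eq_norm_mul_norm_mul_cos_oangle, hr, hw, hoa]; ring
    have hs : stdOrient.areaForm r.dir (‖x - r.apex‖⁻¹ • (x - r.apex)) =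
        Real.Angle.sin (stdOrient.oangle r.dir (x - r.apex)) := by
      rw [my_areaForm_eq, hr, hw, hoa]; ring
    rw [hc, hs, gfun, sin_angleIco, cos_angleIco]

end Aux

/-- the algebraic distance induces the same comparisons as the angular
distance, for rays with unit direction vectors. -/
theorem stmt2 (r s : Ray2) (hr : ‖r.dir‖ = 1) (hs : ‖s.dir‖ = 1) :
    ∀ x : Pt, adist x r < adist x s ↔ dalg x r < dalg x s := by
  intro x
  rw [dalg_eq_gfun x r hr, dalg_eq_gfun x s hs]
  exact (gfun_strictMonoOn.lt_iff_lt (adist_mem x r) (adist_mem x s)).symm
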